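/- arXiv:2210.14736 — 2 statements merged into one kernel-verified Lean document; each statement's English description precedes it below -/
import Mathlib

section
/- Let d ≥ 2 and A ≥ 1 be integers. Let 𝓗 be a family of hyperplanes in ℝ^d of the form X_d = b + Σ_{i=1}^{d-1} a_i X_i with coefficients a_i ∈ {1,…,A}, and suppose 𝓗' ⊆ 𝓗 consists of pairwise distinct hyperplanes with |𝓗'| ≥ A^{d-2} + 1. Then the hyperplanes in 𝓗' have at most one point of ℝ^d in common, i.e., |⋂_{h ∈ 𝓗'} h| ≤ 1. -/
/-- Let `d = e+1 ≥ 2` and `A ≥ 1`. Any family `𝓗'` of at least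
`A^(d-2) + 1` pairwise distinct hyperplanes `X_d = b + ∑ aᵢ Xᵢ`
(identified with their coefficient tuples `(a, b)`) with all `aᵢ ∈ {1,…,A}`
has at most one point of `ℝ^d` in common. -/
theorem stmt_4 (e : ℕ) (he : 1 ≤ e) (A : ℕ) (hA : 1 ≤ A)
    (𝓗' : Finset ((Fin e → ℤ) × ℤ))
    (hcoef : ∀ h ∈ 𝓗', ∀ i : Fin e, h.1 i ∈ Finset.Icc (1 : ℤ) (A : ℤ))
    (hcard : A ^ (e - 1) + 1 ≤ 𝓗'.card) :
    {x : Fin (e + 1) → ℝ | ∀ h ∈ 𝓗',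
        x (Fin.last e) = (h.2 : ℝ) + ∑ i : Fin e, (h.1 i : ℝ) * x i.castSucc}.Subsingleton := by
  intro x hx y hy
  simp only [Set.mem_setOf_eq] at hx hy
  by_contra hne
  set v : Fin e → ℝ := fun i => x i.castSucc - y i.castSucc with hv
  have key : ∀ h ∈ 𝓗', ∑ i, (h.1 i : ℝ) * v i = x (Fin.last e) - y (Fin.last e) := by
    intro h hh
    rw [hx h hh, hy h hh]
    simp only [hv, mul_sub, Finset.sum_sub_distrib]
    ring
  by_cases hv0 : ∀ i, v i = 0
  · have hx_eq : ∀ i : Fin e, x i.castSucc = y i.castSucc := fun i =>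
      sub_eq_zero.mp (hv0 i)
    have hne' : 𝓗'.Nonempty := Finset.card_pos.mp (by omega)
    obtain ⟨h, hh⟩ := hne'
    have hlast : x (Fin.last e) = y (Fin.last e) := by
      rw [hx h hh, hy h hh]
      congr 1
      exact Finset.sum_congr rfl fun i _ => by rw [hx_eq i]
    exact hne (funext fun i => Fin.lastCases hlast (fun i => hx_eq i) i)
  · push_neg at hv0
    obtain ⟨j, hj⟩ := hv0
    set T : Finset (Fin e → ℤ) :=
      Fintype.piFinset (fun i => if i = j then {0} else Finset.Icc (1 : ℤ) (A : ℤ)) with hT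
    have hcardT : T.card = A ^ (e - 1) := by
      rw [hT, Fintype.card_piFinset]
      have : ∀ i : Fin e,
          (if i = j then ({0} : Finset ℤ) else Finset.Icc (1 : ℤ) (A : ℤ)).card
          = if i = j then 1 else A := by
        intro i
        split
        · simp
        · rw [Int.card_Icc]; omega
      rw [Finset.prod_congr rfl fun i _ => this i]
      rw [← Finset.mul_prod_erase Finset.univ _ (Finset.mem_univ j)]
      simp only [if_pos rfl, one_mul]
      rw [Finset.prod_congr rfl (fun i hi => if_neg (Finset.mem_erase.mp hi).1)]
      rw [Finset.prod_const, Finset.card_erase_of_mem (Finset.mem_univ j)]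
      simp
    have hmap : ∀ h ∈ 𝓗', (fun i => if i = j then 0 else h.1 i) ∈ T := by
      intro h hh
      rw [hT, Fintype.mem_piFinset]
      intro i
      by_cases hij : i = j
      · simp [hij]
      · simp only [if_neg hij]
        exact hcoef h hh i
    have hinj : Set.InjOn (fun h : (Fin e → ℤ) × ℤ => fun i => if i = j then 0 else h.1 i)
        𝓗' := by
      intro h1 hh1 h2 hh2 heq
      have hne_eq : ∀ i : Fin e, i ≠ j → h1.1 i = h2.1 i := by
        intro i hij
        have := congrFun heq i
        simpa [if_neg hij] using this
      have hsum1 := key h1 hh1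
      have hsum2 := key h2 hh2
      rw [← Finset.add_sum_erase _ _ (Finset.mem_univ j)] at hsum1 hsum2
      have hrest : ∑ i ∈ Finset.univ.erase j, (h1.1 i : ℝ) * v i
          = ∑ i ∈ Finset.univ.erase j, (h2.1 i : ℝ) * v i :=
        Finset.sum_congr rfl fun i hi => by rw [hne_eq i (Finset.mem_erase.mp hi).1]
      have hjeq : (h1.1 j : ℝ) * v j = (h2.1 j : ℝ) * v j := by linarith
      have hjeq' : h1.1 j = h2.1 j := by
        exact_mod_cast mul_right_cancel₀ hj hjeq
      have ha : h1.1 = h2.1 := funext fun i => by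
        by_cases hij : i = j
        · rw [hij]; exact hjeq'
        · exact hne_eq i hij
      have hb : h1.2 = h2.2 := by
        have e1 := hx h1 hh1
        have e2 := hx h2 hh2
        rw [ha] at e1
        have : (h1.2 : ℝ) = (h2.2 : ℝ) := by linarith
        exact_mod_cast this
      exact Prod.ext ha hb
    have := Finset.card_le_card_of_injOn _ hmap hinj
    rw [hcardT] at this
    omega
end

section
/- Let d ≥ 2 and let s, N, A, B be positive integers with B + (d-1)·A·s ≤ N. Let G = {1,…,s}^{d-1} × {1,…,N}, let 𝓗 be the family of all hyperplanes X_d = b + Σ_{i=1}^{d-1} a_i X_i with a_i ∈ {1,…,A}, b ∈ {1,…,B}, and consider the bipartite incidence graph between G and 𝓗 (point g adjacent to hyperplane h iff g ∈ h). Then this graph contains no complete bipartite subgraph K_{2, A^{d-2}+1}: no two distinct points of G lie simultaneously on A^{d-2}+1 distinct hyperplanes of 𝓗. -/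
/-- With `d = e+1 ≥ 2`, positive `s, N, A, B`, `B + (d-1)·A·s ≤ N`,
the incidence graph between the grid `G = {1,…,s}^(d-1) × {1,…,N}` and the
family of hyperplanes `x_d = b + ∑ aᵢ xᵢ` (`aᵢ ∈ {1,…,A}`, `b ∈ {1,…,B}`)
contains no `K_{2, A^(d-2)+1}`: no two distinct grid points lie simultaneously
on `A^(d-2)+1` distinct hyperplanes. -/
theorem stmt_8 (e : ℕ) (he : 1 ≤ e) (s N A B : ℕ)
    (hs : 0 < s) (hN : 0 < N) (hA : 0 < A) (hB : 0 < B)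
    (hcond : B + e * A * s ≤ N)
    (g₁ g₂ : Fin (e + 1) → ℤ)
    (hg₁ : (∀ i : Fin e, g₁ i.castSucc ∈ Finset.Icc (1 : ℤ) (s : ℤ)) ∧
           g₁ (Fin.last e) ∈ Finset.Icc (1 : ℤ) (N : ℤ))
    (hg₂ : (∀ i : Fin e, g₂ i.castSucc ∈ Finset.Icc (1 : ℤ) (s : ℤ)) ∧
           g₂ (Fin.last e) ∈ Finset.Icc (1 : ℤ) (N : ℤ))
    (hne : g₁ ≠ g₂)
    (𝓗' : Finset ((Fin e → ℤ) × ℤ))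
    (hcoef : ∀ h ∈ 𝓗', (∀ i : Fin e, h.1 i ∈ Finset.Icc (1 : ℤ) (A : ℤ)) ∧
        h.2 ∈ Finset.Icc (1 : ℤ) (B : ℤ))
    (hinc : ∀ h ∈ 𝓗',
        g₁ (Fin.last e) = h.2 + ∑ i : Fin e, h.1 i * g₁ i.castSucc ∧
        g₂ (Fin.last e) = h.2 + ∑ i : Fin e, h.1 i * g₂ i.castSucc) :
    𝓗'.card ≤ A ^ (e - 1) := by
  classical
  by_cases hj : ∃ j : Fin e, g₁ j.castSucc ≠ g₂ j.castSucc
  · obtain ⟨j, hjne⟩ := hj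
    have hd : g₁ j.castSucc - g₂ j.castSucc ≠ 0 := sub_ne_zero_of_ne hjne
    set T : Finset (Fin e → ℤ) :=
      Fintype.piFinset (fun i : Fin e =>
        if i = j then ({0} : Finset ℤ) else Finset.Icc 1 (A : ℤ)) with hT
    have hmaps : ∀ h ∈ 𝓗',
        (fun i : Fin e => if i = j then (0 : ℤ) else h.1 i) ∈ T := by
      intro h hm
      rw [hT, Fintype.mem_piFinset]
      intro i
      by_cases hij : i = j
      · simp [hij]
      · simpa [hij] using (hcoef h hm).1 i
    have hinj : Set.InjOn
        (fun h : (Fin e → ℤ) × ℤ => fun i : Fin e => if i = j then (0 : ℤ) else h.1 i)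
        ↑𝓗' := by
      intro h₁ h₁m h₂ h₂m heq
      have hfi : ∀ i : Fin e, i ≠ j → h₁.1 i = h₂.1 i := by
        intro i hi
        have := congrFun heq i
        simpa [hi] using this
      obtain ⟨e₁, e₁'⟩ := hinc h₁ h₁m
      obtain ⟨e₂, e₂'⟩ := hinc h₂ h₂m
      have t1 : ∑ i : Fin e, h₁.1 i * (g₁ i.castSucc - g₂ i.castSucc)
          = g₁ (Fin.last e) - g₂ (Fin.last e) := by
        simp only [mul_sub, Finset.sum_sub_distrib]
        rw [e₁, e₁']; ring
      have t2 : ∑ i : Fin e, h₂.1 i * (g₁ i.castSucc - g₂ i.castSucc)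
          = g₁ (Fin.last e) - g₂ (Fin.last e) := by
        simp only [mul_sub, Finset.sum_sub_distrib]
        rw [e₂, e₂']; ring
      have key : ∑ i : Fin e, (h₁.1 i * (g₁ i.castSucc - g₂ i.castSucc)
          - h₂.1 i * (g₁ i.castSucc - g₂ i.castSucc)) = 0 := by
        rw [Finset.sum_sub_distrib, t1, t2, sub_self]
      rw [Finset.sum_eq_single j
        (fun i _ hij => by rw [hfi i hij, sub_self])
        (fun hj' => absurd (Finset.mem_univ j) hj')] at key
      have hjeq : h₁.1 j = h₂.1 j := by
        have : (h₁.1 j - h₂.1 j) * (g₁ j.castSucc - g₂ j.castSucc) = 0 := by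
          ring_nf; ring_nf at key; linarith
        rcases mul_eq_zero.mp this with h | h
        · linarith [sub_eq_zero.mp h]
        · exact absurd h hd
      have hfst : h₁.1 = h₂.1 := by
        funext i
        by_cases hij : i = j
        · rw [hij]; exact hjeq
        · exact hfi i hij
      have hsnd : h₁.2 = h₂.2 := by
        have := e₁.symm.trans e₂
        rw [hfst] at this
        linarith
      exact Prod.ext hfst hsnd
    have hcard : 𝓗'.card ≤ T.card := Finset.card_le_card_of_injOn _ hmaps hinj
    have hTcard : T.card = A ^ (e - 1) := by
      rw [hT, Fintype.card_piFinset]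
      have : ∀ i : Fin e,
          ((if i = j then ({0} : Finset ℤ) else Finset.Icc 1 (A : ℤ))).card
          = if i = j then 1 else A := by
        intro i
        by_cases hij : i = j <;> simp [hij, Int.toNat_natCast]
      rw [Finset.prod_congr rfl (fun i _ => this i)]
      rw [← Finset.prod_erase_mul Finset.univ _ (Finset.mem_univ j)]
      rw [if_pos rfl, mul_one]
      rw [Finset.prod_congr rfl (fun i hi =>
        if_neg (Finset.ne_of_mem_erase hi))]
      rw [Finset.prod_const, Finset.card_erase_of_mem (Finset.mem_univ j),
        Finset.card_univ, Fintype.card_fin]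
    omega
  · push_neg at hj
    have hlast : g₁ (Fin.last e) ≠ g₂ (Fin.last e) := by
      intro h
      apply hne
      funext i
      refine Fin.lastCases ?_ ?_ i
      · exact h
      · exact fun k => hj k
    have : 𝓗' = ∅ := by
      rw [Finset.eq_empty_iff_forall_notMem]
      intro h hm
      obtain ⟨e₁, e₂⟩ := hinc h hm
      apply hlast
      rw [e₁, e₂]
      congr 1
      exact Finset.sum_congr rfl fun i _ => by rw [hj i]
    rw [this]
    simp
end
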